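/- Let 0 < x_i < x_{i+1} < 1, a > 0, b real, α = b/a, and write φ(x) = x/(1-x). If α ≠ 0, the function v(x) = (C₂ - C₁·φ(x)^{-α}) with constants C₁, C₂ chosen so that v(x_i) = u_i and v(x_{i+1}) = u_{i+1} solves the two-point boundary value problem (a·x(1-x)·v' + b·v)' = 0 on (x_i, x_{i+1}), and the constant flux a·x(1-x)·v' + b·v equals b·(φ(x_{i+1})^α u_{i+1} - φ(x_i)^α u_i)/(φ(x_{i+1})^α - φ(x_i)^α). -/

import Mathlib

theorem stmt_6 (xi xi1 a b α C₁ C₂ ui ui1 : ℝ)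
    (h0 : 0 < xi) (h1 : xi < xi1) (h2 : xi1 < 1)
    (ha : 0 < a) (hα : α = b / a) (hα0 : α ≠ 0)
    (v : ℝ → ℝ)
    (hv : ∀ x, v x = C₂ - C₁ * (x / (1 - x)) ^ (-α))
    (hbc1 : v xi = ui) (hbc2 : v xi1 = ui1) :
    (∀ x ∈ Set.Ioo xi xi1,
      deriv (fun y => a * y * (1 - y) * deriv v y + b * v y) x = 0) ∧
    (∀ x ∈ Set.Ioo xi xi1,
      a * x * (1 - x) * deriv v x + b * v x =
        b * ((xi1 / (1 - xi1)) ^ α * ui1 - (xi / (1 - xi)) ^ α * ui) /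
          ((xi1 / (1 - xi1)) ^ α - (xi / (1 - xi)) ^ α)) := by
  have hsub : Set.Ioo xi xi1 ⊆ Set.Ioo (0:ℝ) 1 := fun x hx =>
    ⟨h0.trans hx.1, hx.2.trans h2⟩
  have hb : b = a * α := by rw [hα]; field_simp
  have hvf : v = fun y => C₂ - C₁ * (y / (1 - y)) ^ (-α) := funext hv
  -- key flux computation
  have key : ∀ x ∈ Set.Ioo (0:ℝ) 1,
      a * x * (1 - x) * deriv v x + b * v x = b * C₂ := by
    intro x hx
    have hx0 : 0 < x := hx.1
    have hx1 : 0 < 1 - x := by linarith [hx.2]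
    have hx1' : (1:ℝ) - x ≠ 0 := ne_of_gt hx1
    have hφ : 0 < x / (1 - x) := div_pos hx0 hx1
    have hd : HasDerivAt (fun y : ℝ => y / (1 - y)) (1 / (1 - x)^2) x := by
      have h1 : HasDerivAt (fun y : ℝ => y) 1 x := hasDerivAt_id x
      have h2 : HasDerivAt (fun y : ℝ => 1 - y) (-1) x := by
        simpa using h1.const_sub (1:ℝ)
      have h3 := h1.div h2 hx1'
      rw [show (1 * (1 - x) - x * -1) / (1 - x) ^ 2 = 1 / (1 - x) ^ 2 by ring] at h3
      exact h3
    have hr := hd.rpow_const (p := -α) (Or.inl (ne_of_gt hφ))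
    have hdv : HasDerivAt v
        (-(C₁ * (1 / (1 - x)^2 * (-α) * (x / (1 - x)) ^ (-α - 1)))) x := by
      rw [hvf]
      exact (hr.const_mul C₁).const_sub C₂
    have hderiv : deriv v x = C₁ * α * (x / (1 - x)) ^ (-α - 1) / (1 - x)^2 := by
      rw [hdv.deriv]; ring
    have hmul : (x / (1 - x)) * (x / (1 - x)) ^ (-α - 1) = (x / (1 - x)) ^ (-α) := by
      nth_rewrite 1 [← Real.rpow_one (x / (1 - x))]
      rw [← Real.rpow_add hφ]
      norm_num
    rw [hderiv, hv x]
    have hexp : a * x * (1 - x) * (C₁ * α * (x / (1 - x)) ^ (-α - 1) / (1 - x)^2)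
        = a * α * C₁ * ((x / (1 - x)) * (x / (1 - x)) ^ (-α - 1)) := by
      field_simp
    rw [hexp, hmul, hb]
    ring
  constructor
  · intro x hx
    have heq : (fun y => a * y * (1 - y) * deriv v y + b * v y)
        =ᶠ[nhds x] fun _ => b * C₂ := by
      filter_upwards [isOpen_Ioo.mem_nhds (hsub hx)] with y hy using key y hy
    rw [heq.deriv_eq]
    exact deriv_const x _
  · intro x hx
    rw [key x (hsub hx)]
    -- algebra with boundary conditions
    have hφ0 : 0 < xi / (1 - xi) := div_pos h0 (by linarith)
    have hφ1 : 0 < xi1 / (1 - xi1) := div_pos (by linarith) (by linarith)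
    have hlt : xi / (1 - xi) < xi1 / (1 - xi1) := by
      rw [div_lt_div_iff₀ (by linarith) (by linarith)]
      nlinarith
    set A := (xi / (1 - xi)) ^ α with hA
    set B := (xi1 / (1 - xi1)) ^ α with hB
    have hAB : A ≠ B := by
      rcases lt_or_gt_of_ne hα0 with hneg | hpos
      · have h' : (xi / (1 - xi)) ^ (-α) < (xi1 / (1 - xi1)) ^ (-α) :=
          Real.rpow_lt_rpow hφ0.le hlt (by linarith)
        have hA' : A = ((xi / (1 - xi)) ^ (-α))⁻¹ := by
          rw [hA, ← Real.rpow_neg hφ0.le, neg_neg]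
        have hB' : B = ((xi1 / (1 - xi1)) ^ (-α))⁻¹ := by
          rw [hB, ← Real.rpow_neg hφ1.le, neg_neg]
        have hp0 : (0:ℝ) < (xi / (1 - xi)) ^ (-α) := Real.rpow_pos_of_pos hφ0 _
        have : B < A := by
          rw [hA', hB']
          exact inv_strictAnti₀ hp0 h'
        exact (ne_of_gt this)
      · exact ne_of_lt (Real.rpow_lt_rpow hφ0.le hlt hpos)
    have hinv0 : A * (xi / (1 - xi)) ^ (-α) = 1 := by
      rw [hA, ← Real.rpow_add hφ0]
      simp
    have hinv1 : B * (xi1 / (1 - xi1)) ^ (-α) = 1 := by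
      rw [hB, ← Real.rpow_add hφ1]
      simp
    have hu0 : A * ui = A * C₂ - C₁ := by
      rw [← hbc1, hv xi, mul_sub,
        show A * (C₁ * (xi / (1 - xi)) ^ (-α)) = C₁ * (A * (xi / (1 - xi)) ^ (-α)) from by ring,
        hinv0]
      ring
    have hu1 : B * ui1 = B * C₂ - C₁ := by
      rw [← hbc2, hv xi1, mul_sub,
        show B * (C₁ * (xi1 / (1 - xi1)) ^ (-α)) = C₁ * (B * (xi1 / (1 - xi1)) ^ (-α)) from by ring,
        hinv1]
      ring
    have hnum : B * ui1 - A * ui = C₂ * (B - A) := by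
      rw [hu0, hu1]; ring
    rw [hnum]
    have : B - A ≠ 0 := sub_ne_zero.mpr (Ne.symm hAB)
    field_simp
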